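/- Let T be a standard Young tableau of skew shape λ/μ and let π = β(T) be its Yamanouchi permutation. Then Peak(T) = Val(π) and Val(T) = Peak(π). -/

import Mathlib

/-- `lam/mu` is a skew shape: `lam` and `mu` are partitions (1-indexed, weakly decreasing,
with finitely many nonzero parts) with `mu ⊆ lam`. -/
def IsSkewShape (lam mu : ℕ → ℕ) : Prop :=
  (∀ i, 1 ≤ i → lam (i+1) ≤ lam i) ∧ (∀ i, 1 ≤ i → mu (i+1) ≤ mu i) ∧
  (∀ i, mu i ≤ lam i) ∧ (∃ N, ∀ i, N ≤ i → lam i = 0)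

/-- A standard Young tableau of skew shape `lam/mu` with `n` entries, recorded by the
(1-indexed) row and column of each entry `1, …, n`.  Rows are numbered from top to
bottom, columns from left to right; the cells of `lam/mu` in row `r` are the columns `c`
with `mu r < c ≤ lam r`.  Entries increase along rows and columns.  The functions `row`
and `col` are normalized to `0` outside `{1, …, n}`. -/
structure SkewSYT (lam mu : ℕ → ℕ) (n : ℕ) where
  row : ℕ → ℕ
  col : ℕ → ℕ
  row_pos : ∀ k, 1 ≤ k → k ≤ n → 1 ≤ row k
  mem_cell : ∀ k, 1 ≤ k → k ≤ n → mu (row k) < col k ∧ col k ≤ lam (row k)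
  inj' : ∀ k l, 1 ≤ k → k ≤ n → 1 ≤ l → l ≤ n → row k = row l → col k = col l → k = l
  surj' : ∀ r c, 1 ≤ r → mu r < c → c ≤ lam r → ∃ k, 1 ≤ k ∧ k ≤ n ∧ row k = r ∧ col k = c
  row_inc : ∀ k l, 1 ≤ k → k < l → l ≤ n → row k = row l → col k < col l
  col_inc : ∀ k l, 1 ≤ k → k < l → l ≤ n → col k = col l → row k < row l
  row_out : ∀ k, ¬(1 ≤ k ∧ k ≤ n) → row k = 0
  col_out : ∀ k, ¬(1 ≤ k ∧ k ≤ n) → col k = 0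

/-- The peak set of a standard Young tableau: `i` (with `2 ≤ i ≤ n-1`) is a peak when
`i-1` is an ascent (`i` is not in a lower row than `i-1`) and `i` is a descent
(`i+1` is in a strictly lower row than `i`). -/
def SkewSYT.peakSet {lam mu : ℕ → ℕ} {n : ℕ} (T : SkewSYT lam mu n) : Set ℕ :=
  {i | 2 ≤ i ∧ i + 1 ≤ n ∧ T.row i ≤ T.row (i-1) ∧ T.row i < T.row (i+1)}

/-- The valley set of a standard Young tableau: `i-1` is a descent and `i` is an ascent. -/
def SkewSYT.valleySet {lam mu : ℕ → ℕ} {n : ℕ} (T : SkewSYT lam mu n) : Set ℕ :=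
  {i | 2 ≤ i ∧ i + 1 ≤ n ∧ T.row (i-1) < T.row i ∧ T.row (i+1) ≤ T.row i}

/-- The Knuth transformation `κ_i` on words/permutations (moves `acb ↦ cab`, `bca ↦ bac`,
`cab ↦ acb`, `bac ↦ bca` for `a < b < c` at positions `i-1, i, i+1`). -/
def kappaP (w : ℕ → ℕ) (i : ℕ) : ℕ → ℕ :=
  if (w (i-1) < w i ∧ w (i+1) < w i ∧ w (i-1) < w (i+1)) ∨
      (w i < w (i-1) ∧ w i < w (i+1) ∧ w (i+1) < w (i-1)) then
    fun j => if j = i - 1 then w i else if j = i then w (i-1) else w j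
  else
    fun j => if j = i then w (i+1) else if j = i + 1 then w i else w j

/-- The peak set of a permutation/word: `w (i-1) < w i > w (i+1)` with `2 ≤ i ≤ n-1`. -/
def peakSetP (n : ℕ) (w : ℕ → ℕ) : Set ℕ :=
  {i | 2 ≤ i ∧ i + 1 ≤ n ∧ w (i-1) < w i ∧ w (i+1) < w i}

/-- The valley set of a permutation/word: `w (i-1) > w i < w (i+1)` with `2 ≤ i ≤ n-1`. -/
def valleySetP (n : ℕ) (w : ℕ → ℕ) : Set ℕ :=
  {i | 2 ≤ i ∧ i + 1 ≤ n ∧ w i < w (i-1) ∧ w i < w (i+1)}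

/-- The Yamanouchi permutation associated to the Yamanouchi word `y` of an SYT of skew
shape `lam/mu` (with `a_i = lam i - mu i`): the `a_i` occurrences of the letter `i` are
replaced, from left to right in decreasing order, by the numbers
`a_1 + ⋯ + a_{i-1} + 1, …, a_1 + ⋯ + a_{i-1} + a_i`; thus position `j` receives
`a_1 + ⋯ + a_{y j - 1}` plus the number of occurrences of `y j` at positions `≥ j`. -/
def yamPerm (lam mu : ℕ → ℕ) (n : ℕ) (y : ℕ → ℕ) : ℕ → ℕ :=
  fun j => (∑ t ∈ Finset.Ico 1 (y j), (lam t - mu t)) +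
    ((Finset.Icc j n).filter (fun t => y t = y j)).card

private lemma yam_bounds (lam mu : ℕ → ℕ) (n : ℕ) (T : SkewSYT lam mu n)
    (k : ℕ) (hk1 : 1 ≤ k) (hkn : k ≤ n) :
    (∑ t ∈ Finset.Ico 1 (T.row k), (lam t - mu t)) < yamPerm lam mu n T.row k ∧
    yamPerm lam mu n T.row k ≤ ∑ t ∈ Finset.Ico 1 (T.row k + 1), (lam t - mu t) := by
  constructor
  · have hpos : 0 < ((Finset.Icc k n).filter (fun t => T.row t = T.row k)).card :=
      Finset.card_pos.2 ⟨k, by simp [Finset.mem_filter, hkn]⟩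
    simp only [yamPerm]; omega
  · have hr1 : 1 ≤ T.row k := T.row_pos k hk1 hkn
    have hcard : ((Finset.Icc k n).filter (fun t => T.row t = T.row k)).card
        ≤ lam (T.row k) - mu (T.row k) := by
      have hmain := Finset.card_le_card_of_injOn (f := T.col)
        (s := (Finset.Icc k n).filter (fun t => T.row t = T.row k))
        (t := Finset.Ioc (mu (T.row k)) (lam (T.row k)))
        (by
          intro t ht
          simp only [Finset.mem_coe, Finset.mem_filter, Finset.mem_Icc] at ht
          have h1t : 1 ≤ t := le_trans hk1 ht.1.1
          have hc := T.mem_cell t h1t ht.1.2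
          rw [ht.2] at hc
          simp only [Finset.mem_coe, Finset.mem_Ioc]
          exact hc)
        (by
          intro a ha b hb hab
          simp only [Finset.coe_filter, Set.mem_setOf_eq, Finset.mem_Icc] at ha hb
          exact T.inj' a b (le_trans hk1 ha.1.1) ha.1.2 (le_trans hk1 hb.1.1) hb.1.2
            (ha.2.trans hb.2.symm) hab)
      simpa [Nat.card_Ioc] using hmain
    rw [Finset.sum_Ico_succ_top hr1]
    simp only [yamPerm]; omega

private lemma yam_trich (lam mu : ℕ → ℕ) (n : ℕ) (T : SkewSYT lam mu n)
    {i j : ℕ} (hi : 1 ≤ i) (hij : i < j) (hj : j ≤ n) :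
    (T.row i < T.row j → yamPerm lam mu n T.row i < yamPerm lam mu n T.row j) ∧
    (T.row j < T.row i → yamPerm lam mu n T.row j < yamPerm lam mu n T.row i) ∧
    (T.row i = T.row j → yamPerm lam mu n T.row j < yamPerm lam mu n T.row i) := by
  have hin : i ≤ n := le_of_lt (lt_of_lt_of_le hij hj)
  have hji : 1 ≤ j := le_trans hi (le_of_lt hij)
  have Bi := yam_bounds lam mu n T i hi hin
  have Bj := yam_bounds lam mu n T j hji hj
  have mono : ∀ a b : ℕ, a ≤ b →
      (∑ t ∈ Finset.Ico 1 a, (lam t - mu t)) ≤ ∑ t ∈ Finset.Ico 1 b, (lam t - mu t) := by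
    intro a b hab
    exact Finset.sum_le_sum_of_subset (Finset.Ico_subset_Ico le_rfl hab)
  refine ⟨?_, ?_, ?_⟩
  · intro hlt
    have := mono (T.row i + 1) (T.row j) hlt
    omega
  · intro hlt
    have := mono (T.row j + 1) (T.row i) hlt
    omega
  · intro heq
    have hsub : (Finset.Icc j n).filter (fun t => T.row t = T.row j) ⊂
        (Finset.Icc i n).filter (fun t => T.row t = T.row i) := by
      constructor
      · intro t ht
        simp only [Finset.mem_filter, Finset.mem_Icc] at ht ⊢
        exact ⟨⟨le_trans (le_of_lt hij) ht.1.1, ht.1.2⟩, ht.2.trans heq.symm⟩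
      · intro hcontra
        have hmem : i ∈ (Finset.Icc j n).filter (fun t => T.row t = T.row j) :=
          hcontra (by simp [Finset.mem_filter, hin])
        simp only [Finset.mem_filter, Finset.mem_Icc] at hmem
        omega
    have hcard := Finset.card_lt_card hsub
    have hA : (∑ t ∈ Finset.Ico 1 (T.row i), (lam t - mu t)) =
        ∑ t ∈ Finset.Ico 1 (T.row j), (lam t - mu t) := by rw [heq]
    simp only [yamPerm]
    omega

/-- For `T` a standard Young tableau of skew shape `lam/mu` and `π = β T` its Yamanouchi
permutation: `Peak(T) = Val(π)` and `Val(T) = Peak(π)`. -/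
theorem stmt7 (lam mu : ℕ → ℕ) (n : ℕ) (h : IsSkewShape lam mu)
    (T : SkewSYT lam mu n) :
    T.peakSet = valleySetP n (yamPerm lam mu n T.row) ∧
    T.valleySet = peakSetP n (yamPerm lam mu n T.row) := by
  have key : ∀ i j : ℕ, 1 ≤ i → i < j → j ≤ n →
      ((yamPerm lam mu n T.row i < yamPerm lam mu n T.row j ↔ T.row i < T.row j) ∧ (yamPerm lam mu n T.row j < yamPerm lam mu n T.row i ↔ T.row j ≤ T.row i)) := by
    intro i j hi hij hj
    obtain ⟨h1, h2, h3⟩ := yam_trich lam mu n T hi hij hj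
    constructor
    · constructor
      · intro hlt
        rcases lt_trichotomy (T.row i) (T.row j) with hc | hc | hc
        · exact hc
        · exact absurd (h3 hc) (by omega)
        · exact absurd (h2 hc) (by omega)
      · exact h1
    · constructor
      · intro hlt
        rcases lt_trichotomy (T.row i) (T.row j) with hc | hc | hc
        · exact absurd (h1 hc) (by omega)
        · omega
        · omega
      · intro hle
        rcases eq_or_lt_of_le hle with hc | hc
        · exact h3 hc.symm
        · exact h2 hc
  constructor
  · ext i
    simp only [SkewSYT.peakSet, valleySetP, Set.mem_setOf_eq]
    constructor
    · rintro ⟨h2i, hin, ha, hd⟩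
      refine ⟨h2i, hin, ?_, ?_⟩
      · have hk := key (i - 1) i (by omega) (by omega) (by omega)
        have : i - 1 + 1 = i := by omega
        exact (hk.2).2 ha
      · exact (key i (i + 1) (by omega) (by omega) hin).1.2 hd
    · rintro ⟨h2i, hin, hv1, hv2⟩
      refine ⟨h2i, hin, ?_, ?_⟩
      · exact ((key (i - 1) i (by omega) (by omega) (by omega)).2).1 hv1
      · exact (key i (i + 1) (by omega) (by omega) hin).1.1 hv2
  · ext i
    simp only [SkewSYT.valleySet, peakSetP, Set.mem_setOf_eq]
    constructor
    · rintro ⟨h2i, hin, ha, hd⟩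
      refine ⟨h2i, hin, ?_, ?_⟩
      · exact (key (i - 1) i (by omega) (by omega) (by omega)).1.2 ha
      · exact ((key i (i + 1) (by omega) (by omega) hin).2).2 hd
    · rintro ⟨h2i, hin, hv1, hv2⟩
      refine ⟨h2i, hin, ?_, ?_⟩
      · exact (key (i - 1) i (by omega) (by omega) (by omega)).1.1 hv1
      · exact ((key i (i + 1) (by omega) (by omega) hin).2).1 hv2
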